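/- arXiv:2004.01832 — 3 statements merged into one kernel-verified Lean document; each statement's English description precedes it below -/
import Mathlib

section
/- Let c ∈ ℝ, g ∈ ℝ^d, A a d×d real symmetric matrix, and ε > 0. Define H = [[A, g], [gᵀ, 1]] ∈ ℝ^{(d+1)×(d+1)}. Then the supremum over all δ ∈ ℝ^d with ‖δ‖_∞ ≤ ε of c + gᵀδ + ½ δᵀAδ is at most c + ((dε² + 1)/2) ‖H‖_F − ½, where ‖H‖_F is the Frobenius norm of H. -/
open Matrix

lemma cs_sum (ι : Type*) [Fintype ι] (f h : ι → ℝ) :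
    ∑ i, f i * h i ≤ Real.sqrt (∑ i, f i ^ 2) * Real.sqrt (∑ i, h i ^ 2) := by
  have h1 : (∑ i, f i * h i) ^ 2 ≤ (∑ i, f i ^ 2) * ∑ i, h i ^ 2 :=
    Finset.sum_mul_sq_le_sq_mul_sq _ _ _
  calc ∑ i, f i * h i ≤ |∑ i, f i * h i| := le_abs_self _
    _ = Real.sqrt ((∑ i, f i * h i) ^ 2) := (Real.sqrt_sq_eq_abs _).symm
    _ ≤ Real.sqrt ((∑ i, f i ^ 2) * ∑ i, h i ^ 2) := Real.sqrt_le_sqrt h1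
    _ = _ := Real.sqrt_mul (Finset.sum_nonneg fun i _ => sq_nonneg _) _

/-- Proposition 1 of the paper (with `E‖Hz‖` replaced by the Frobenius norm it
estimates). With `H = [[A, g], [gᵀ, 1]]`, the supremum over `‖δ‖_∞ ≤ ε` of the second-order
Taylor expansion `c + gᵀδ + ½ δᵀAδ` is at most `c + ((dε² + 1)/2)·‖H‖_F − ½`. -/
theorem stmt6 (d : ℕ) (c : ℝ) (g : Fin d → ℝ) (A : Matrix (Fin d) (Fin d) ℝ)
    (hA : A.IsSymm) (ε : ℝ) (hε : 0 < ε) :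
    let H : Matrix (Fin d ⊕ Unit) (Fin d ⊕ Unit) ℝ :=
      Matrix.fromBlocks A (Matrix.of fun i _ => g i) (Matrix.of fun _ j => g j) 1
    sSup {y : ℝ | ∃ δ : Fin d → ℝ, (∀ i, |δ i| ≤ ε) ∧
        y = c + g ⬝ᵥ δ + (1 / 2) * (δ ⬝ᵥ A.mulVec δ)}
      ≤ c + ((d * ε ^ 2 + 1) / 2) * Real.sqrt (Matrix.trace (Hᵀ * H)) - 1 / 2 := by
  intro H
  have hne : Set.Nonempty {y : ℝ | ∃ δ : Fin d → ℝ, (∀ i, |δ i| ≤ ε) ∧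
      y = c + g ⬝ᵥ δ + (1 / 2) * (δ ⬝ᵥ A.mulVec δ)} :=
    ⟨_, 0, fun i => by simpa using hε.le, rfl⟩
  apply csSup_le hne
  rintro y ⟨δ, hδ, rfl⟩
  set z : Fin d ⊕ Unit → ℝ := Sum.elim δ (fun _ => 1) with hz
  have expand : z ⬝ᵥ H *ᵥ z
      = ∑ p : (Fin d ⊕ Unit) × (Fin d ⊕ Unit), (z p.1 * z p.2) * H p.1 p.2 := by
    rw [Fintype.sum_prod_type]
    simp only [dotProduct, Matrix.mulVec, Finset.mul_sum]
    exact Finset.sum_congr rfl fun i _ => Finset.sum_congr rfl fun j _ => by ring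
  -- quadratic form identity
  have hQ : z ⬝ᵥ H *ᵥ z = δ ⬝ᵥ A *ᵥ δ + 2 * (g ⬝ᵥ δ) + 1 := by
    rw [expand, Fintype.sum_prod_type]
    simp only [Fintype.sum_sum_type, hz, Sum.elim_inl, Sum.elim_inr, H,
      Matrix.fromBlocks_apply₁₁, Matrix.fromBlocks_apply₁₂, Matrix.fromBlocks_apply₂₁,
      Matrix.fromBlocks_apply₂₂, Matrix.of_apply, dotProduct, Matrix.mulVec,
      Finset.mul_sum, Finset.univ_unique, Finset.sum_singleton, Matrix.one_apply_eq,
      one_mul, mul_one]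
    have h1 : ∑ x : Fin d, ∑ i : Fin d, δ x * (A x i * δ i)
        = ∑ x : Fin d, ∑ i : Fin d, δ x * δ i * A x i :=
      Finset.sum_congr rfl fun i _ => Finset.sum_congr rfl fun j _ => by ring
    have h2 : ∑ i : Fin d, 2 * (g i * δ i) = ∑ i : Fin d, δ i * g i + ∑ i : Fin d, δ i * g i := by
      rw [← Finset.sum_add_distrib]
      exact Finset.sum_congr rfl fun i _ => by ring
    rw [h1, h2, Finset.sum_add_distrib]; ring
  -- trace is sum of squares
  have hT : Matrix.trace (Hᵀ * H) = ∑ p : (Fin d ⊕ Unit) × (Fin d ⊕ Unit), H p.1 p.2 ^ 2 := by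
    simp only [Matrix.trace, Matrix.diag, Matrix.mul_apply, Matrix.transpose_apply]
    rw [Fintype.sum_prod_type, Finset.sum_comm]
    simp [sq]
  -- sum of squares of z
  have hzsq : ∑ i, z i ^ 2 ≤ d * ε ^ 2 + 1 := by
    rw [Fintype.sum_sum_type]
    simp only [hz, Sum.elim_inl, Sum.elim_inr]
    have : ∑ i : Fin d, δ i ^ 2 ≤ ∑ _i : Fin d, ε ^ 2 :=
      Finset.sum_le_sum fun i _ => sq_le_sq' (neg_le_of_abs_le (hδ i)) (le_of_abs_le (hδ i))
    simp at this ⊢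
    linarith
  -- Cauchy–Schwarz bound on quadratic form
  have hCS : z ⬝ᵥ H *ᵥ z ≤ (∑ i, z i ^ 2) * Real.sqrt (Matrix.trace (Hᵀ * H)) := by
    have cs := cs_sum ((Fin d ⊕ Unit) × (Fin d ⊕ Unit))
      (fun p => z p.1 * z p.2) (fun p => H p.1 p.2)
    have hsq : ∑ p : (Fin d ⊕ Unit) × (Fin d ⊕ Unit), (z p.1 * z p.2) ^ 2
        = (∑ i, z i ^ 2) ^ 2 := by
      rw [Fintype.sum_prod_type, sq (∑ i, z i ^ 2), Finset.sum_mul_sum]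
      simp [mul_pow]
    rw [expand, hT]
    calc ∑ p : (Fin d ⊕ Unit) × (Fin d ⊕ Unit), (z p.1 * z p.2) * H p.1 p.2
        ≤ Real.sqrt (∑ p : (Fin d ⊕ Unit) × (Fin d ⊕ Unit), (z p.1 * z p.2) ^ 2) *
          Real.sqrt (∑ p : (Fin d ⊕ Unit) × (Fin d ⊕ Unit), H p.1 p.2 ^ 2) := cs
      _ = (∑ i, z i ^ 2) * Real.sqrt (∑ p : (Fin d ⊕ Unit) × (Fin d ⊕ Unit), H p.1 p.2 ^ 2) := by
          rw [hsq, Real.sqrt_sq (Finset.sum_nonneg fun i _ => sq_nonneg _)]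
  have hfinal : z ⬝ᵥ H *ᵥ z ≤ (d * ε ^ 2 + 1) * Real.sqrt (Matrix.trace (Hᵀ * H)) :=
    hCS.trans (mul_le_mul_of_nonneg_right hzsq (Real.sqrt_nonneg _))
  rw [hQ] at hfinal
  linarith
end

section
/- Let c ∈ ℝ, g ∈ ℝ^d, A a d×d real symmetric matrix, and ε > 0. Define H = [[A, g], [gᵀ, 1]] ∈ ℝ^{(d+1)×(d+1)}. Then the supremum over all δ ∈ ℝ^d with ‖δ‖₂ ≤ ε of c + gᵀδ + ½ δᵀAδ is at most c + ((ε² + 1)/2) ‖H‖_F − ½. -/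
open Matrix

lemma quad_le_frob {I : Type*} [Fintype I] (H : Matrix I I ℝ) (z : I → ℝ) :
    ∑ i, ∑ j, z i * H i j * z j ≤
      Real.sqrt (∑ i, ∑ j, H i j ^ 2) * (∑ i, z i ^ 2) := by
  have hT : (0:ℝ) ≤ ∑ i, z i ^ 2 := Finset.sum_nonneg fun i _ => sq_nonneg _
  have hS : (0:ℝ) ≤ ∑ i, ∑ j, H i j ^ 2 :=
    Finset.sum_nonneg fun i _ => Finset.sum_nonneg fun j _ => sq_nonneg _
  have hcs := Finset.sum_mul_sq_le_sq_mul_sq (Finset.univ (α := I × I))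
      (fun p => H p.1 p.2) (fun p => z p.1 * z p.2)
  have h1 : ∑ i, ∑ j, z i * H i j * z j =
      ∑ p : I × I, H p.1 p.2 * (z p.1 * z p.2) := by
    rw [← Finset.univ_product_univ, Finset.sum_product]
    exact (Finset.sum_congr rfl fun i _ => Finset.sum_congr rfl fun j _ => by ring).symm
  have h2 : ∑ p : I × I, (H p.1 p.2) ^ 2 = ∑ i, ∑ j, H i j ^ 2 := by
    rw [← Finset.univ_product_univ, Finset.sum_product]
  have h3 : ∑ p : I × I, (z p.1 * z p.2) ^ 2 = (∑ i, z i ^ 2) ^ 2 := by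
    rw [← Finset.univ_product_univ, Finset.sum_product, sq, Finset.sum_mul_sum]
    exact Finset.sum_congr rfl fun i _ => Finset.sum_congr rfl fun j _ => by ring
  rw [h1]
  calc ∑ p : I × I, H p.1 p.2 * (z p.1 * z p.2)
      ≤ Real.sqrt ((∑ p : I × I, H p.1 p.2 * (z p.1 * z p.2)) ^ 2) := by
        rw [Real.sqrt_sq_eq_abs]; exact le_abs_self _
    _ ≤ Real.sqrt ((∑ i, ∑ j, H i j ^ 2) * (∑ i, z i ^ 2) ^ 2) := by
        apply Real.sqrt_le_sqrt
        calc _ ≤ (∑ p : I × I, (H p.1 p.2) ^ 2) * ∑ p : I × I, (z p.1 * z p.2) ^ 2 := hcs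
          _ = _ := by rw [h2, h3]
    _ = _ := by
        rw [Real.sqrt_mul hS, Real.sqrt_sq hT]

/-- the ℓ₂ version of Proposition 1. With `H = [[A, g], [gᵀ, 1]]`, the supremum
over `‖δ‖₂ ≤ ε` of `c + gᵀδ + ½ δᵀAδ` is at most `c + ((ε² + 1)/2)·‖H‖_F − ½`. -/
theorem stmt7 (d : ℕ) (c : ℝ) (g : Fin d → ℝ) (A : Matrix (Fin d) (Fin d) ℝ)
    (hA : A.IsSymm) (ε : ℝ) (hε : 0 < ε) :
    let H : Matrix (Fin d ⊕ Unit) (Fin d ⊕ Unit) ℝ :=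
      Matrix.fromBlocks A (Matrix.of fun i _ => g i) (Matrix.of fun _ j => g j) 1
    sSup {y : ℝ | ∃ δ : Fin d → ℝ, Real.sqrt (∑ i, (δ i) ^ 2) ≤ ε ∧
        y = c + g ⬝ᵥ δ + (1 / 2) * (δ ⬝ᵥ A.mulVec δ)}
      ≤ c + ((ε ^ 2 + 1) / 2) * Real.sqrt (Matrix.trace (Hᵀ * H)) - 1 / 2 := by
  intro H
  have htr : Matrix.trace (Hᵀ * H) = ∑ i, ∑ j, H i j ^ 2 := by
    simp only [Matrix.trace, Matrix.diag, Matrix.mul_apply, Matrix.transpose_apply, ← sq]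
    rw [Finset.sum_comm]
  have hSnn : (0:ℝ) ≤ Real.sqrt (∑ i, ∑ j, H i j ^ 2) := Real.sqrt_nonneg _
  refine csSup_le ⟨c, 0, ?_, by simp⟩ ?_
  · simp [Real.sqrt_eq_zero', hε.le]
  rintro y ⟨δ, hδ, rfl⟩
  have hnn : (0:ℝ) ≤ ∑ i, (δ i) ^ 2 := Finset.sum_nonneg fun i _ => sq_nonneg _
  have hδ2 : ∑ i, (δ i) ^ 2 ≤ ε ^ 2 := by
    nlinarith [Real.sq_sqrt hnn, Real.sqrt_nonneg (∑ i, (δ i)^2), hδ]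
  set z : Fin d ⊕ Unit → ℝ := Sum.elim δ (fun _ => 1) with hz
  have hquad : ∑ i, ∑ j, z i * H i j * z j =
      δ ⬝ᵥ A.mulVec δ + 2 * (g ⬝ᵥ δ) + 1 := by
    simp only [Fintype.sum_sum_type, hz, Sum.elim_inl, Sum.elim_inr, H,
      Matrix.fromBlocks_apply₁₁, Matrix.fromBlocks_apply₁₂,
      Matrix.fromBlocks_apply₂₁, Matrix.fromBlocks_apply₂₂,
      Matrix.of_apply, Matrix.one_apply, dotProduct, Matrix.mulVec]
    simp only [Finset.univ_unique, Finset.sum_singleton, if_pos rfl, if_true]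
    rw [Finset.sum_add_distrib]
    have h4 : ∀ i : Fin d, ∑ j, δ i * A i j * δ j = δ i * (∑ j, A i j * δ j) := by
      intro i; rw [Finset.mul_sum]; exact Finset.sum_congr rfl fun j _ => by ring
    simp only [h4]
    have hsym : ∑ x, δ x * g x = ∑ x, g x * δ x :=
      Finset.sum_congr rfl fun i _ => mul_comm _ _
    ring_nf
    rw [hsym]
    ring_nf
  have hzsq : ∑ i, z i ^ 2 = (∑ i, (δ i) ^ 2) + 1 := by
    simp [Fintype.sum_sum_type, hz]
  have hmain := quad_le_frob H z
  rw [hquad, hzsq] at hmain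
  have hbound : ((∑ i, (δ i)^2) + 1) * Real.sqrt (∑ i, ∑ j, H i j ^ 2)
      ≤ (ε^2 + 1) * Real.sqrt (∑ i, ∑ j, H i j ^ 2) := by
    apply mul_le_mul_of_nonneg_right _ hSnn
    linarith
  rw [htr]
  nlinarith [hmain, hbound]
end

section
/- Let w ∈ ℝ^d, r ∈ ℝ, u ≥ 0, and ρ > 0. Then the maximum over all δ ∈ ℝ^d with ‖δ‖₂ ≤ ρ of r·wᵀδ + ½ u (wᵀδ)² equals ρ|r|‖w‖₂ + ½ ρ² u ‖w‖₂². -/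
/-- Section 4.1: for `w ∈ ℝ^d`, `r ∈ ℝ`, `u ≥ 0`, `ρ > 0`, the maximum over
all `δ` with `‖δ‖₂ ≤ ρ` of `r·wᵀδ + ½ u (wᵀδ)²` equals `ρ|r|‖w‖₂ + ½ ρ² u ‖w‖₂²`. -/
theorem stmt17 (d : ℕ) (w : Fin d → ℝ) (r u ρ : ℝ) (hu : 0 ≤ u) (hρ : 0 < ρ) :
    IsGreatest {y : ℝ | ∃ δ : Fin d → ℝ, Real.sqrt (∑ i, (δ i) ^ 2) ≤ ρ ∧
        y = r * (∑ i, w i * δ i) + (1 / 2) * u * (∑ i, w i * δ i) ^ 2}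
      (ρ * |r| * Real.sqrt (∑ i, (w i) ^ 2) + (1 / 2) * ρ ^ 2 * u * (∑ i, (w i) ^ 2)) := by
  set S := ∑ i, (w i) ^ 2 with hS
  have hSnn : 0 ≤ S := Finset.sum_nonneg fun i _ => sq_nonneg _
  set W := Real.sqrt S with hW
  have hWnn : 0 ≤ W := Real.sqrt_nonneg _
  have hW2 : W ^ 2 = S := Real.sq_sqrt hSnn
  constructor
  · -- membership
    by_cases hw : S = 0
    · refine ⟨0, ?_, ?_⟩
      · simp [Real.sqrt_eq_zero', le_of_lt hρ]
      · have : (∑ i, w i * (0 : Fin d → ℝ) i) = 0 := by simp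
        rw [this]
        rw [hw] at hW
        simp [hW, hw]
    · have hSpos : 0 < S := lt_of_le_of_ne hSnn (Ne.symm hw)
      have hWpos : 0 < W := Real.sqrt_pos.mpr hSpos
      set c : ℝ := if r < 0 then -1 else 1 with hc
      have hc2 : c ^ 2 = 1 := by rcases ite_eq_or_eq (r < 0) (-1 : ℝ) 1 with h | h <;>
        rw [hc, h] <;> ring
      have hcr : r * c = |r| := by
        rcases lt_or_ge r 0 with h | h
        · simp [hc, h, abs_of_neg h]
        · simp [hc, not_lt.mpr h, abs_of_nonneg h]
      refine ⟨fun i => (ρ * c / W) * w i, ?_, ?_⟩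
      · have : ∑ i, ((ρ * c / W) * w i) ^ 2 = (ρ * c / W) ^ 2 * S := by
          rw [hS, Finset.mul_sum]
          exact Finset.sum_congr rfl fun i _ => by ring
        rw [this]
        have : (ρ * c / W) ^ 2 * S = ρ ^ 2 := by
          field_simp
          rw [hc2, hW2, one_mul]
        rw [this, Real.sqrt_sq (le_of_lt hρ)]
      · have hsum : (∑ i, w i * ((ρ * c / W) * w i)) = (ρ * c / W) * S := by
          rw [Finset.mul_sum]
          exact Finset.sum_congr rfl fun i _ => by ring
        rw [hsum]
        have hsimp : (ρ * c / W) * S = ρ * c * W := by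
          rw [← hW2]; field_simp
        rw [hsimp]
        have e1 : r * (ρ * c * W) = ρ * |r| * W := by
          rw [show r * (ρ * c * W) = ρ * (r * c) * W by ring, hcr]
        have e2 : (ρ * c * W) ^ 2 = ρ ^ 2 * S := by
          rw [show (ρ * c * W) ^ 2 = ρ ^ 2 * W ^ 2 * c ^ 2 by ring, hc2, hW2]; ring
        rw [e1, e2]; ring
  · -- upper bound
    rintro y ⟨δ, hδ, rfl⟩
    set s := ∑ i, w i * δ i with hs
    have hδnn : 0 ≤ ∑ i, (δ i) ^ 2 := Finset.sum_nonneg fun i _ => sq_nonneg _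
    have hcs : s ^ 2 ≤ S * ∑ i, (δ i) ^ 2 := Finset.sum_mul_sq_le_sq_mul_sq _ _ _
    have hδρ : ∑ i, (δ i) ^ 2 ≤ ρ ^ 2 := by
      have := Real.sq_sqrt hδnn
      nlinarith [Real.sqrt_nonneg (∑ i, (δ i) ^ 2)]
    have hs2 : s ^ 2 ≤ ρ ^ 2 * S := by nlinarith
    have habs : |s| ≤ ρ * W := by
      have h1 : (ρ * W) ^ 2 = ρ ^ 2 * S := by rw [mul_pow, hW2]
      have h2 : |s| ^ 2 ≤ (ρ * W) ^ 2 := by rw [sq_abs, h1]; exact hs2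
      exact (pow_le_pow_iff_left₀ (abs_nonneg s) (by positivity) two_ne_zero).mp h2
    have h1 : r * s ≤ ρ * |r| * W := by
      calc r * s ≤ |r * s| := le_abs_self _
        _ = |r| * |s| := abs_mul _ _
        _ ≤ |r| * (ρ * W) := by
            exact mul_le_mul_of_nonneg_left habs (abs_nonneg _)
        _ = ρ * |r| * W := by ring
    nlinarith
end
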